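/- In a Boolean algebra with a total transitive relation ≿ satisfying monotonicity and quasi-additivity, for pairwise incompatible α, β, γ, δ: if α ≈ β and γ ≈ δ (where x ≈ y means x ≿ y and y ≿ x), then (α ∨ β) ≿ (γ ∨ δ) if and only if α ≿ γ. -/
import Mathlib

theorem stmt_7 {B : Type*} [BooleanAlgebra B] (r : B → B → Prop)
    (htrans : ∀ x y z, r x y → r y z → r x z)
    (htot : ∀ x y, r x y ∨ r y x)
    (hdist : ∀ x y, y ≤ x → r x y)
    (hquasi : ∀ x y, r x y ↔ r (x ⊓ yᶜ) (y ⊓ xᶜ))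
    (a b c d : B)
    (hpair : ([a, b, c, d] : List B).Pairwise fun x y => x ⊓ y = ⊥)
    (hab : r a b ∧ r b a) (hcd : r c d ∧ r d c) :
    (r (a ⊔ b) (c ⊔ d) ↔ r a c) := by
  simp only [List.pairwise_cons, List.mem_cons, List.not_mem_nil, List.Pairwise.nil,
    forall_eq_or_imp, forall_eq, or_false, and_true] at hpair
  obtain ⟨⟨hab0, hac0, had0⟩, ⟨hbc0, hbd0⟩, hcd0⟩ := hpair
  have key : ∀ x y z : B, x ⊓ z = ⊥ → y ⊓ z = ⊥ → (x ⊔ z) ⊓ (y ⊔ z)ᶜ = x ⊓ yᶜ := by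
    intro x y z hxz hyz
    have hx : x ⊓ zᶜ = x := inf_eq_left.mpr ((disjoint_iff.mpr hxz).le_compl_right)
    calc (x ⊔ z) ⊓ (y ⊔ z)ᶜ = (x ⊔ z) ⊓ (yᶜ ⊓ zᶜ) := by rw [compl_sup]
      _ = ((x ⊔ z) ⊓ zᶜ) ⊓ yᶜ := by rw [inf_comm yᶜ zᶜ, ← inf_assoc]
      _ = x ⊓ yᶜ := by rw [inf_sup_right, inf_compl_self, sup_bot_eq, hx]
  have cancel : ∀ x y z : B, x ⊓ z = ⊥ → y ⊓ z = ⊥ → (r (x ⊔ z) (y ⊔ z) ↔ r x y) := by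
    intro x y z hxz hyz
    rw [hquasi (x ⊔ z) (y ⊔ z), key x y z hxz hyz, key y x z hyz hxz, ← hquasi]
  have swap : ∀ x y : B, x ⊓ y = ⊥ → y ⊓ x = ⊥ := fun x y h => by rw [inf_comm, h]
  constructor
  · intro h
    by_contra hac
    have hca := (htot a c).resolve_left hac
    have hdb : r d b := htrans _ _ _ hcd.2 (htrans _ _ _ hca hab.1)
    have h1 : r (c ⊔ d) (c ⊔ b) := by
      rw [sup_comm c d, sup_comm c b]
      exact (cancel d b c (swap c d hcd0.1) hbc0).mpr hdb
    have h2 : r (a ⊔ b) (c ⊔ b) := htrans _ _ _ h h1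
    exact hac ((cancel a c b hab0 (swap b c hbc0)).mp h2)
  · intro hac
    have hbd : r b d := htrans _ _ _ hab.2 (htrans _ _ _ hac hcd.1)
    have h1 : r (a ⊔ b) (a ⊔ d) := by
      rw [sup_comm a b, sup_comm a d]
      exact (cancel b d a (swap a b hab0) (swap a d had0)).mpr hbd
    have h2 : r (a ⊔ d) (c ⊔ d) := (cancel a c d had0 hcd0.1).mpr hac
    exact htrans _ _ _ h1 h2
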